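/- (Identity (3.20): second moment of the position cocycle under KQ.) Let a(ω,u,α,v) = α and b(ω,u) = ∫_ℝ α² (∫_Λ κ^ω_{0,u} Φ^ω(0,u,α,v) dμ^ω_α(v)) dα. Then, as an equality in [0,∞], ⟨a²⟩_{KQ} = (1/2) ⟨b⟩_Q, i.e. Z^{−1} ∫_Ω dP(ω) ∫_Λ dμ^ω_0(u) (κ^ω_{0,u})^{−1} ∫_0^∞ α² dα ∫_Λ κ^ω_{0,u} Φ^ω(0,u,α,v) dμ^ω_α(v) = (1/2) ⟨b⟩_Q. In particular, if ⟨b⟩_Q < ∞ then a ∈ L²(KQ). -/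

import Mathlib

open MeasureTheory ProbabilityTheory
open scoped ENNReal

lemma isSFiniteKernel_of_finite {α β : Type*} [MeasurableSpace α] [MeasurableSpace β]
    (κ : Kernel α β) (h : ∀ a, IsFiniteMeasure (κ a)) : IsSFiniteKernel κ := by
  classical
  have hmeas : Measurable fun a => (κ a Set.univ).toReal :=
    (Kernel.measurable_coe κ MeasurableSet.univ).ennreal_toReal
  have hA : ∀ n : ℕ, MeasurableSet {a | (κ a Set.univ).toReal ∈ Set.Ico (n : ℝ) (n + 1)} :=
    fun n => hmeas measurableSet_Ico
  refine ⟨⟨fun n => Kernel.piecewise (hA n) κ 0, fun n => ?_, ?_⟩⟩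
  · refine ⟨⟨ENNReal.ofReal (n + 1), ENNReal.ofReal_lt_top, fun a => ?_⟩⟩
    rw [Kernel.piecewise_apply]
    split_ifs with ha
    · have hfin : κ a Set.univ ≠ ⊤ := (measure_lt_top (κ a) _).ne
      calc κ a Set.univ = ENNReal.ofReal (κ a Set.univ).toReal := (ENNReal.ofReal_toReal hfin).symm
        _ ≤ ENNReal.ofReal (n + 1) := ENNReal.ofReal_le_ofReal ha.2.le
    · simp
  · ext a s hs
    rw [Kernel.sum_apply' _ _ hs]
    have h0 : (0 : ℝ) ≤ (κ a Set.univ).toReal := ENNReal.toReal_nonneg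
    set n₀ := ⌊(κ a Set.univ).toReal⌋₊ with hn₀
    have key : ∀ n : ℕ, Kernel.piecewise (hA n) κ 0 a s = if n = n₀ then κ a s else 0 := by
      intro n
      rw [Kernel.piecewise_apply]
      by_cases hmem : (κ a Set.univ).toReal ∈ Set.Ico (n : ℝ) (n + 1)
      · have : n = n₀ := by
          rw [hn₀, eq_comm]
          exact Nat.floor_eq_iff h0 |>.mpr ⟨hmem.1, by exact_mod_cast hmem.2⟩
        subst this
        simp [Set.mem_setOf_eq, hmem.1, hmem.2]
      · have : n ≠ n₀ := by
          intro hcontra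
          apply hmem
          subst hcontra
          exact ⟨Nat.floor_le h0, Nat.lt_floor_add_one _⟩
        simp only [Set.mem_setOf_eq, if_neg hmem, if_neg this]
        simp
    simp_rw [key]
    exact (tsum_ite_eq n₀ (fun _ => κ a s)).symm

set_option maxHeartbeats 2000000 in
/-- **Identity (3.20): second moment of the position cocycle under `KQ`.**
With `a(ω,u,α,v) = α`, one has `⟨a²⟩_{KQ} = (1/2)⟨b⟩_Q` as an equality in `[0,∞]`;
in particular if `⟨b⟩_Q < ∞` then `a ∈ L²(KQ)`. -/
theorem second_moment_cocycle_KQ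
    {d : ℕ}
    (Λ : Set (EuclideanSpace ℝ (Fin (d + 1)))) (hΛ : IsCompact Λ)
    {Ω : Type*} [MeasurableSpace Ω] (P : Measure Ω) [IsProbabilityMeasure P]
    (θ : ℝ → Ω → Ω)
    (hθmeas : Measurable fun p : ℝ × Ω => θ p.1 p.2)
    (hθ0 : θ 0 = id)
    (hθadd : ∀ γ γ' : ℝ, θ (γ + γ') = θ γ ∘ θ γ')
    (hθP : ∀ γ : ℝ, MeasurePreserving (θ γ) P P)
    (μ : Ω → ℝ → Measure Λ)
    (hμfin : ∀ ω α, IsFiniteMeasure (μ ω α))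
    (hμmeas : ∀ s : Set Λ, MeasurableSet s → Measurable fun p : Ω × ℝ => μ p.1 p.2 s)
    (hμshift : ∀ γ ω α, μ (θ γ ω) α = μ ω (α + γ))
    (κ : Ω → ℝ → Λ → ℝ)
    (hκmeas : Measurable fun p : Ω × ℝ × Λ => κ p.1 p.2.1 p.2.2)
    (hκmem : ∀ ω α u, κ ω α u ∈ Set.Ioc (0 : ℝ) 1)
    (hκshift : ∀ γ ω α u, κ (θ γ ω) α u = κ ω (α + γ) u)
    (Φ : Ω → ℝ → Λ → ℝ → Λ → ℝ)
    (hΦmeas : Measurable fun p : Ω × ℝ × Λ × ℝ × Λ =>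
      Φ p.1 p.2.1 p.2.2.1 p.2.2.2.1 p.2.2.2.2)
    (hΦnonneg : ∀ ω α u β v, 0 ≤ Φ ω α u β v)
    (hΦsymm : ∀ ω α u β v, Φ ω α u β v = Φ ω β v α u)
    (hΦshift : ∀ γ ω α u β v, Φ (θ γ ω) α u β v = Φ ω (α + γ) u (β + γ) v)
    (hΦnorm : ∀ ω α, ∀ᵐ u ∂(μ ω α),
      (∫ β : ℝ, ∫ v, κ ω α u * Φ ω α u β v ∂(μ ω β)) = 1)
    (Z : ℝ) (hZpos : 0 < Z)
    (hZ : Z = ∫ ω, ∫ u, (κ ω 0 u)⁻¹ ∂(μ ω 0) ∂P)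
    :
    ((ENNReal.ofReal Z)⁻¹ * (∫⁻ ω, (∫⁻ u, ENNReal.ofReal ((κ ω 0 u)⁻¹) *
        (∫⁻ α in Set.Ioi (0 : ℝ), ENNReal.ofReal (α ^ 2) *
          (∫⁻ v, ENNReal.ofReal (κ ω 0 u * Φ ω 0 u α v) ∂(μ ω α))) ∂(μ ω 0)) ∂P)
      =
    2⁻¹ * ((ENNReal.ofReal Z)⁻¹ * (∫⁻ ω, (∫⁻ u, ENNReal.ofReal ((κ ω 0 u)⁻¹) *
        (∫⁻ α : ℝ, ENNReal.ofReal (α ^ 2) *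
          (∫⁻ v, ENNReal.ofReal (κ ω 0 u * Φ ω 0 u α v) ∂(μ ω α))) ∂(μ ω 0)) ∂P)))
    ∧
    (((ENNReal.ofReal Z)⁻¹ * (∫⁻ ω, (∫⁻ u, ENNReal.ofReal ((κ ω 0 u)⁻¹) *
        (∫⁻ α : ℝ, ENNReal.ofReal (α ^ 2) *
          (∫⁻ v, ENNReal.ofReal (κ ω 0 u * Φ ω 0 u α v) ∂(μ ω α))) ∂(μ ω 0)) ∂P)) < ⊤ →
      ((ENNReal.ofReal Z)⁻¹ * (∫⁻ ω, (∫⁻ u, ENNReal.ofReal ((κ ω 0 u)⁻¹) *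
        (∫⁻ α in Set.Ioi (0 : ℝ), ENNReal.ofReal (α ^ 2) *
          (∫⁻ v, ENNReal.ofReal (κ ω 0 u * Φ ω 0 u α v) ∂(μ ω α))) ∂(μ ω 0)) ∂P)) < ⊤) := by
  classical
  -- the kernel of the family μ
  set k : Kernel (Ω × ℝ) Λ :=
    { toFun := fun p => μ p.1 p.2,
      measurable' := Measure.measurable_of_measurable_coe _ hμmeas } with hkdef
  haveI : IsSFiniteKernel k := isSFiniteKernel_of_finite k (fun p => hμfin p.1 p.2)
  have hkap : ∀ p : Ω × ℝ, k p = μ p.1 p.2 := fun p => rfl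
  -- basic measurability of Φ with second argument 0
  have hΦ0 : Measurable fun p : Ω × Λ × ℝ × Λ =>
      ENNReal.ofReal (Φ p.1 0 p.2.1 p.2.2.1 p.2.2.2) := by
    have hmap : Measurable fun p : Ω × Λ × ℝ × Λ =>
        ((p.1, (0:ℝ), p.2.1, p.2.2.1, p.2.2.2) : Ω × ℝ × Λ × ℝ × Λ) := by fun_prop
    exact ENNReal.measurable_ofReal.comp (hΦmeas.comp hmap)
  -- F1 (ω, u, α) = ∫⁻ v, ofReal (Φ ω 0 u α v) ∂ μ ω α  is measurable
  set F1 : Ω × Λ × ℝ → ℝ≥0∞ :=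
    fun p => ∫⁻ v, ENNReal.ofReal (Φ p.1 0 p.2.1 p.2.2 v) ∂ μ p.1 p.2.2 with hF1def
  have hm12 : Measurable fun p : Ω × Λ × ℝ => (p.1, p.2.2) := by fun_prop
  have hF1 : Measurable F1 := by
    have := Measurable.lintegral_kernel_prod_right'
      (κ := k.comap (fun p : Ω × Λ × ℝ => (p.1, p.2.2)) hm12)
      (f := fun q : (Ω × Λ × ℝ) × Λ => ENNReal.ofReal (Φ q.1.1 0 q.1.2.1 q.1.2.2 q.2))
      (by
        have hmap : Measurable fun q : (Ω × Λ × ℝ) × Λ =>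
            ((q.1.1, q.1.2.1, q.1.2.2, q.2) : Ω × Λ × ℝ × Λ) := by fun_prop
        exact hΦ0.comp hmap)
    simpa [Kernel.comap_apply, hkap] using this
  -- W family
  have hW : Measurable fun p : Ω × Λ × ℝ => ENNReal.ofReal (p.2.2 ^ 2) * F1 p := by
    exact Measurable.mul (by fun_prop) hF1
  have hWneg : Measurable fun p : Ω × Λ × ℝ =>
      ENNReal.ofReal (p.2.2 ^ 2) * F1 (p.1, p.2.1, -p.2.2) := by
    have hmap : Measurable fun p : Ω × Λ × ℝ => ((p.1, p.2.1, -p.2.2) : Ω × Λ × ℝ) := by fun_prop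
    exact Measurable.mul (by fun_prop) (hF1.comp hmap)
  -- set-integral versions: measurable on Ω × Λ
  have hB : ∀ ν : Measure ℝ, SFinite ν → Measurable fun p : Ω × Λ =>
      ∫⁻ α, ENNReal.ofReal (α ^ 2) * F1 (p.1, p.2, α) ∂ν := by
    intro ν hν
    exact Measurable.lintegral_prod_right'
      (f := fun q : (Ω × Λ) × ℝ => ENNReal.ofReal (q.2 ^ 2) * F1 (q.1.1, q.1.2, q.2))
      (by
        have hmap : Measurable fun q : (Ω × Λ) × ℝ =>
            ((q.1.1, q.1.2, q.2) : Ω × Λ × ℝ) := by fun_prop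
        exact hW.comp hmap)
  -- kernel for the measure μ ω 0 indexed by ω or by (ω, β)
  have hmΩ : Measurable fun ω : Ω => (ω, (0:ℝ)) := by fun_prop
  have hmΩR : Measurable fun q : Ω × ℝ => (q.1, (0:ℝ)) := by fun_prop
  have hC : ∀ ν : Measure ℝ, SFinite ν → Measurable fun ω : Ω =>
      ∫⁻ u, ∫⁻ α, ENNReal.ofReal (α ^ 2) * F1 (ω, u, α) ∂ν ∂ μ ω 0 := by
    intro ν hν
    have := Measurable.lintegral_kernel_prod_right'
      (κ := k.comap (fun ω : Ω => (ω, (0:ℝ))) hmΩ)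
      (f := fun q : Ω × Λ => ∫⁻ α, ENNReal.ofReal (α ^ 2) * F1 (q.1, q.2, α) ∂ν)
      (hB ν hν)
    simpa [Kernel.comap_apply, hkap] using this
  -- G (ω, β) = ∫⁻ u, ofReal β² * F1 (ω, u, -β) ∂ μ ω 0, and primed version with β
  have hG : Measurable fun q : Ω × ℝ =>
      ∫⁻ u, ENNReal.ofReal (q.2 ^ 2) * F1 (q.1, u, -q.2) ∂ μ q.1 0 := by
    have := Measurable.lintegral_kernel_prod_right'
      (κ := k.comap (fun q : Ω × ℝ => (q.1, (0:ℝ))) hmΩR)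
      (f := fun q : (Ω × ℝ) × Λ => ENNReal.ofReal (q.1.2 ^ 2) * F1 (q.1.1, q.2, -q.1.2))
      (by
        have hmap : Measurable fun q : (Ω × ℝ) × Λ =>
            ((q.1.1, q.2, q.1.2) : Ω × Λ × ℝ) := by fun_prop
        exact hWneg.comp hmap)
    simpa [Kernel.comap_apply, hkap] using this
  have hG' : Measurable fun q : Ω × ℝ =>
      ∫⁻ u, ENNReal.ofReal (q.2 ^ 2) * F1 (q.1, u, q.2) ∂ μ q.1 0 := by
    have := Measurable.lintegral_kernel_prod_right'
      (κ := k.comap (fun q : Ω × ℝ => (q.1, (0:ℝ))) hmΩR)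
      (f := fun q : (Ω × ℝ) × Λ => ENNReal.ofReal (q.1.2 ^ 2) * F1 (q.1.1, q.2, q.1.2))
      (by
        have hmap : Measurable fun q : (Ω × ℝ) × Λ =>
            ((q.1.1, q.2, q.1.2) : Ω × Λ × ℝ) := by fun_prop
        exact hW.comp hmap)
    simpa [Kernel.comap_apply, hkap] using this
  -- the reduced quantities
  set JI : ℝ≥0∞ := ∫⁻ ω, ∫⁻ u, ∫⁻ α in Set.Ioi (0:ℝ),
      ENNReal.ofReal (α ^ 2) * F1 (ω, u, α) ∂volume ∂ μ ω 0 ∂P with hJIdef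
  set Jm : ℝ≥0∞ := ∫⁻ ω, ∫⁻ u, ∫⁻ α in Set.Iio (0:ℝ),
      ENNReal.ofReal (α ^ 2) * F1 (ω, u, α) ∂volume ∂ μ ω 0 ∂P with hJmdef
  set JF : ℝ≥0∞ := ∫⁻ ω, ∫⁻ u, (∫⁻ α : ℝ,
      ENNReal.ofReal (α ^ 2) * F1 (ω, u, α)) ∂ μ ω 0 ∂P with hJFdef
  -- Step 0 : reduction (cancel the κ factors)
  have hred : ∀ (ω : Ω) (u : Λ) (ν : Measure ℝ),
      ENNReal.ofReal ((κ ω 0 u)⁻¹) * (∫⁻ α, ENNReal.ofReal (α ^ 2) *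
          (∫⁻ v, ENNReal.ofReal (κ ω 0 u * Φ ω 0 u α v) ∂(μ ω α)) ∂ν)
        = ∫⁻ α, ENNReal.ofReal (α ^ 2) * F1 (ω, u, α) ∂ν := by
    intro ω u ν
    have hc : (0:ℝ) < κ ω 0 u := (hκmem ω 0 u).1
    rw [← lintegral_const_mul' _ _ ENNReal.ofReal_ne_top]
    refine lintegral_congr fun α => ?_
    rw [mul_left_comm]
    congr 1
    rw [← lintegral_const_mul' _ _ ENNReal.ofReal_ne_top]
    refine lintegral_congr fun v => ?_
    rw [← ENNReal.ofReal_mul (by positivity), inv_mul_cancel_left₀ hc.ne']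
  have hredI : (∫⁻ ω, (∫⁻ u, ENNReal.ofReal ((κ ω 0 u)⁻¹) *
        (∫⁻ α in Set.Ioi (0 : ℝ), ENNReal.ofReal (α ^ 2) *
          (∫⁻ v, ENNReal.ofReal (κ ω 0 u * Φ ω 0 u α v) ∂(μ ω α))) ∂(μ ω 0)) ∂P) = JI :=
    lintegral_congr fun ω => lintegral_congr fun u => hred ω u _
  have hredF : (∫⁻ ω, (∫⁻ u, ENNReal.ofReal ((κ ω 0 u)⁻¹) *
        (∫⁻ α : ℝ, ENNReal.ofReal (α ^ 2) *
          (∫⁻ v, ENNReal.ofReal (κ ω 0 u * Φ ω 0 u α v) ∂(μ ω α))) ∂(μ ω 0)) ∂P) = JF :=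
    lintegral_congr fun ω => lintegral_congr fun u => hred ω u _
  -- splitting the full line
  have hsplit : JF = Jm + JI := by
    have h1 : ∀ ω u, (∫⁻ α : ℝ, ENNReal.ofReal (α ^ 2) * F1 (ω, u, α))
        = (∫⁻ α in Set.Iio (0:ℝ), ENNReal.ofReal (α ^ 2) * F1 (ω, u, α))
          + ∫⁻ α in Set.Ioi (0:ℝ), ENNReal.ofReal (α ^ 2) * F1 (ω, u, α) := by
      intro ω u
      have hz : Set.univ =ᵐ[volume] ({(0:ℝ)}ᶜ : Set ℝ) := by
        refine (MeasureTheory.ae_eq_univ.mpr ?_).symm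
        simp [compl_compl]
      rw [← setLIntegral_univ, Measure.restrict_congr_set hz, ← Set.Iio_union_Ioi,
        lintegral_union measurableSet_Ioi ((Set.Iio_disjoint_Ici le_rfl).mono_right Set.Ioi_subset_Ici_self)]
    have h2 : ∀ ω, (∫⁻ u, (∫⁻ α : ℝ, ENNReal.ofReal (α ^ 2) * F1 (ω, u, α)) ∂ μ ω 0)
        = (∫⁻ u, (∫⁻ α in Set.Iio (0:ℝ), ENNReal.ofReal (α ^ 2) * F1 (ω, u, α) ∂volume) ∂ μ ω 0)
          + ∫⁻ u, (∫⁻ α in Set.Ioi (0:ℝ), ENNReal.ofReal (α ^ 2) * F1 (ω, u, α) ∂volume) ∂ μ ω 0 := by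
      intro ω
      rw [← lintegral_add_left]
      · exact lintegral_congr fun u => h1 ω u
      · exact (hB _ inferInstance).comp (by fun_prop : Measurable fun u : Λ => (ω, u))
    rw [hJFdef, hJmdef, hJIdef, ← lintegral_add_left (hC _ inferInstance)]
    exact lintegral_congr fun ω => h2 ω
  -- the symmetry step : Jm = JI
  have hsym : Jm = JI := by
    -- (a) negate the variable
    have ha : ∀ ω u, (∫⁻ α in Set.Iio (0:ℝ), ENNReal.ofReal (α ^ 2) * F1 (ω, u, α))
        = ∫⁻ β in Set.Ioi (0:ℝ), ENNReal.ofReal (β ^ 2) * F1 (ω, u, -β) := by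
      intro ω u
      have hmap : (volume : Measure ℝ).restrict (Set.Iio 0)
          = Measure.map Neg.neg (volume.restrict (Set.Ioi 0)) := by
        have h1 : (Neg.neg : ℝ → ℝ) ⁻¹' (Set.Iio 0) = Set.Ioi 0 := by
          ext x; simp
        conv_lhs => rw [← Measure.map_neg_eq_self (volume : Measure ℝ),
          measurableEmbedding_neg.restrict_map, h1]
      have hfm : Measurable fun α : ℝ => ENNReal.ofReal (α ^ 2) * F1 (ω, u, α) :=
        hW.comp (by fun_prop : Measurable fun α : ℝ => ((ω, u, α) : Ω × Λ × ℝ))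
      rw [hmap, lintegral_map hfm measurable_neg]
      refine lintegral_congr fun β => ?_
      simp [neg_sq]
    -- (b)+(c) : swap the integrals to bring β outside
    have hswap1 : ∀ S : Set ℝ, ∀ h : ∀ p : Ω × Λ × ℝ, True,
        True := fun _ _ => trivial
    have hb : Jm = ∫⁻ β in Set.Ioi (0:ℝ), ∫⁻ ω,
        ∫⁻ u, ENNReal.ofReal (β ^ 2) * F1 (ω, u, -β) ∂ μ ω 0 ∂P ∂volume := by
      rw [hJmdef]
      have e1 : ∀ ω, (∫⁻ u, (∫⁻ α in Set.Iio (0:ℝ),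
          ENNReal.ofReal (α ^ 2) * F1 (ω, u, α) ∂volume) ∂ μ ω 0)
          = ∫⁻ β in Set.Ioi (0:ℝ), ∫⁻ u,
              ENNReal.ofReal (β ^ 2) * F1 (ω, u, -β) ∂ μ ω 0 ∂volume := by
        intro ω
        rw [lintegral_congr fun u => ha ω u]
        exact lintegral_lintegral_swap
          ((hWneg.comp (by fun_prop : Measurable fun q : Λ × ℝ => (ω, q.1, q.2))).aemeasurable)
      rw [lintegral_congr e1]
      exact lintegral_lintegral_swap hG.aemeasurable
    -- (d)+(e) : for every β, use the flow θ β and the symmetry of Φ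
    have hd : ∀ β : ℝ, (∫⁻ ω, ∫⁻ u, ENNReal.ofReal (β ^ 2) * F1 (ω, u, -β) ∂ μ ω 0 ∂P)
        = ∫⁻ ω, ∫⁻ u, ENNReal.ofReal (β ^ 2) * F1 (ω, u, β) ∂ μ ω 0 ∂P := by
      intro β
      have hmeasβ : Measurable fun ω : Ω =>
          ∫⁻ u, ENNReal.ofReal (β ^ 2) * F1 (ω, u, -β) ∂ μ ω 0 :=
        hG.comp (by fun_prop : Measurable fun ω : Ω => (ω, β))
      rw [← (hθP β).lintegral_comp hmeasβ]
      refine lintegral_congr fun ω => ?_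
      -- compute the composed integrand
      have hμ0 : μ (θ β ω) 0 = μ ω β := by rw [hμshift]; norm_num
      have hμβ : μ (θ β ω) (-β) = μ ω 0 := by rw [hμshift]; norm_num
      have hΦc : ∀ u v, Φ (θ β ω) 0 u (-β) v = Φ ω 0 v β u := by
        intro u v
        rw [hΦshift]
        norm_num
        rw [hΦsymm]
      calc (∫⁻ u, ENNReal.ofReal (β ^ 2) * F1 (θ β ω, u, -β) ∂ μ (θ β ω) 0)
          = ∫⁻ u, ENNReal.ofReal (β ^ 2) *
              ∫⁻ v, ENNReal.ofReal (Φ ω 0 v β u) ∂ μ ω 0 ∂ μ ω β := by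
            rw [hμ0]
            refine lintegral_congr fun u => ?_
            rw [hF1def]
            simp only
            rw [hμβ]
            exact congrArg _ (lintegral_congr fun v => by rw [hΦc])
        _ = ∫⁻ u, ∫⁻ v, ENNReal.ofReal (β ^ 2) *
              ENNReal.ofReal (Φ ω 0 v β u) ∂ μ ω 0 ∂ μ ω β := by
            refine lintegral_congr fun u => ?_
            rw [lintegral_const_mul' _ _ ENNReal.ofReal_ne_top]
        _ = ∫⁻ v, ∫⁻ u, ENNReal.ofReal (β ^ 2) *
              ENNReal.ofReal (Φ ω 0 v β u) ∂ μ ω β ∂ μ ω 0 := by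
            refine lintegral_lintegral_swap ?_
            apply AEMeasurable.const_mul
            exact (hΦ0.comp (by fun_prop :
              Measurable fun q : Λ × Λ => (ω, q.2, β, q.1))).aemeasurable
        _ = ∫⁻ u, ENNReal.ofReal (β ^ 2) * F1 (ω, u, β) ∂ μ ω 0 := by
            refine lintegral_congr fun v => ?_
            rw [lintegral_const_mul' _ _ ENNReal.ofReal_ne_top]
    -- (f) : swap back
    have hf : JI = (∫⁻ β in Set.Ioi (0:ℝ), ∫⁻ ω,
        ∫⁻ u, ENNReal.ofReal (β ^ 2) * F1 (ω, u, β) ∂ μ ω 0 ∂P ∂volume) := by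
      rw [hJIdef]
      calc (∫⁻ ω, ∫⁻ u, (∫⁻ β in Set.Ioi (0:ℝ),
              ENNReal.ofReal (β ^ 2) * F1 (ω, u, β) ∂volume) ∂ μ ω 0 ∂P)
          = ∫⁻ ω, (∫⁻ β in Set.Ioi (0:ℝ), ∫⁻ u,
              ENNReal.ofReal (β ^ 2) * F1 (ω, u, β) ∂ μ ω 0 ∂volume) ∂P := by
            refine lintegral_congr fun ω => ?_
            exact lintegral_lintegral_swap
              ((hW.comp (by fun_prop :
                Measurable fun q : Λ × ℝ => ((ω, q.1, q.2) : Ω × Λ × ℝ))).aemeasurable)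
        _ = ∫⁻ β in Set.Ioi (0:ℝ), ∫⁻ ω,
              ∫⁻ u, ENNReal.ofReal (β ^ 2) * F1 (ω, u, β) ∂ μ ω 0 ∂P ∂volume :=
            lintegral_lintegral_swap hG'.aemeasurable
    rw [hb, hf]
    exact lintegral_congr fun β => hd β
  -- conclude
  have hmain : JF = 2 * JI := by rw [hsplit, hsym, two_mul]
  have h2 : (2 : ℝ≥0∞)⁻¹ * 2 = 1 := ENNReal.inv_mul_cancel two_ne_zero ENNReal.ofNat_ne_top
  constructor
  · rw [hredI, hredF, hmain]
    calc (ENNReal.ofReal Z)⁻¹ * JI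
        = 1 * ((ENNReal.ofReal Z)⁻¹ * JI) := (one_mul _).symm
      _ = 2⁻¹ * ((ENNReal.ofReal Z)⁻¹ * (2 * JI)) := by rw [← h2]; ring
  · intro hfin
    rw [hredI]
    rw [hredF, hmain] at hfin
    have hJI : JI < ⊤ := by
      by_contra htop
      push_neg at htop
      rw [top_le_iff.mp htop] at hfin
      have hZne : (ENNReal.ofReal Z)⁻¹ ≠ 0 := by
        simp [ENNReal.inv_ne_zero, ENNReal.ofReal_ne_top]
      simp [ENNReal.mul_top, hZne, ENNReal.mul_eq_top] at hfin
    exact ENNReal.mul_lt_top (by simp [ENNReal.inv_lt_top, hZpos]) hJI
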